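/- Suppose ρ is a stationary measure with K := supp ρ minimal, and A ⊂ K satisfies ρ(A)=1, A has non-empty interior relative to K, and every pair of points of A is contractible under φ. Then φ is two-point contractible on all of K. -/

import Mathlib

open MeasureTheory ProbabilityTheory Filter Topology

/-- A (discrete-time) filtered random dynamical system over a memoryless stationary
noise space, on a metric space `X`. -/
structure MRDS (Ω X : Type*) [mΩ : MeasurableSpace Ω] [MetricSpace X]
    [mX : MeasurableSpace X] [BorelSpace X] where
  P : Measure Ω
  hprob : IsProbabilityMeasure P
  F : ℕ → MeasurableSpace Ω
  hle : ∀ t, F t ≤ mΩ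
  hmono : Monotone F
  θ : ℕ → Ω → Ω
  hθ0 : θ 0 = id
  hθadd : ∀ s t, θ (s + t) = θ s ∘ θ t
  hθmeas : ∀ s t, @Measurable Ω Ω (F (s + t)) (F s) (θ t)
  hθpres : ∀ t, MeasurePreserving (θ t) P P
  memless : ∀ s, Indep (F s) ((⨆ t, F t).comap (θ s)) P
  φ : ℕ → Ω → X → X
  hφcont : ∀ t ω, Continuous (φ t ω)
  hφmeas : ∀ t, @Measurable (Ω × X) X ((F t).prod mX) mX (fun p => φ t p.1 p.2)
  hφ0 : ∀ ω, φ 0 ω = id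
  hφcocycle : ∀ s t ω, φ (s + t) ω = φ t (θ s ω) ∘ φ s ω

namespace MRDS

variable {Ω X : Type*} [MeasurableSpace Ω] [MetricSpace X]
  [MeasurableSpace X] [BorelSpace X]

/-- The one-point transition probabilities `φ_x^t`. -/
noncomputable def law (R : MRDS Ω X) (x : X) (t : ℕ) : Measure X :=
  R.P.map (fun ω => R.φ t ω x)

/-- A closed set that is forward-invariant for the one-point transition probabilities. -/
def FwdInv (R : MRDS Ω X) (K : Set X) : Prop :=
  IsClosed K ∧ ∀ x ∈ K, ∀ t, R.law x t K = 1

/-- A minimal set: non-empty, closed, forward-invariant, with no proper non-empty closed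
forward-invariant subsets. -/
def Minimal (R : MRDS Ω X) (K : Set X) : Prop :=
  K.Nonempty ∧ R.FwdInv K ∧ ∀ K' ⊆ K, R.FwdInv K' → K' = K ∨ K' = ∅

/-- `A` contracts under the noise realisation `ω`. -/
def contracts (R : MRDS Ω X) (ω : Ω) (A : Set X) : Prop :=
  Tendsto (fun t => EMetric.diam (R.φ t ω '' A)) atTop (𝓝 0)

/-- `(ω, x)` is an asymptotically stable pair. -/
def stablePair (R : MRDS Ω X) (ω : Ω) (x : X) : Prop :=
  ∃ U ∈ 𝓝 x, R.contracts ω U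

/-- The set of asymptotically stable pairs. -/
def O (R : MRDS Ω X) : Set (Ω × X) := {p | R.stablePair p.1 p.2}

/-- The set of noise realisations under which `U` contracts. -/
def EU (R : MRDS Ω X) (U : Set X) : Set Ω := {ω | R.contracts ω U}

/-- `x` is potentially stable. -/
def potStable (R : MRDS Ω X) (x : X) : Prop := 0 < R.P {ω | R.stablePair ω x}

/-- `x` is almost surely stable. -/
def asStable (R : MRDS Ω X) (x : X) : Prop := R.P {ω | R.stablePair ω x} = 1

/-- `φ` is globally synchronising. -/
def synchronising (R : MRDS Ω X) : Prop :=
  ∀ x y : X,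
    R.P {ω | Tendsto (fun t => dist (R.φ t ω x) (R.φ t ω y)) atTop (𝓝 0)} = 1

/-- `φ` is stably synchronising. -/
def stablySynchronising (R : MRDS Ω X) : Prop :=
  R.synchronising ∧ ∀ x : X, R.asStable x

/-- `ρ` is a stationary measure for the one-point transition probabilities. -/
def stationary (R : MRDS Ω X) (ρ : Measure X) : Prop :=
  ∀ t, ∀ A : Set X, MeasurableSet A → ∫⁻ x, R.law x t A ∂ρ = ρ A

end MRDS

-- ======================================================================
-- Auxiliary development
-- ======================================================================

open scoped ENNReal

namespace MRDS

section Generic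

open MeasurableSpace

variable {Ω Y : Type*} [mΩ : MeasurableSpace Ω] [MetricSpace Y] [mY : MeasurableSpace Y]
  [BorelSpace Y] (R : MRDS Ω Y)

/-- The full noise σ-algebra. -/
noncomputable def bigF : MeasurableSpace Ω := ⨆ t, R.F t

lemma bigF_le : R.bigF ≤ mΩ := iSup_le R.hle

lemma F_le_bigF (t : ℕ) : R.F t ≤ R.bigF := le_iSup R.F t

lemma measφF (s : ℕ) (x : Y) : Measurable[R.F s] fun ω => R.φ s ω x := by
  have h1 : @Measurable Ω (Ω × Y) (R.F s) ((R.F s).prod mY) (fun ω => (ω, x)) :=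
    @Measurable.prodMk Ω (R.F s) Ω Y (R.F s) mY _ _ measurable_id measurable_const
  exact (R.hφmeas s).comp h1

lemma measφ (s : ℕ) (x : Y) : Measurable fun ω => R.φ s ω x :=
  (R.measφF s x).mono (R.hle s) le_rfl

lemma measφJoint (t : ℕ) : Measurable fun q : Ω × Y => R.φ t q.1 q.2 :=
  (R.hφmeas t).mono (sup_le_sup (MeasurableSpace.comap_mono (R.hle t)) le_rfl) le_rfl

lemma law_def (x : Y) (t : ℕ) : R.law x t = R.P.map (fun ω => R.φ t ω x) := rfl

lemma law_apply (x : Y) (t : ℕ) {S : Set Y} (hS : MeasurableSet S) :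
    R.law x t S = R.P ((fun ω => R.φ t ω x) ⁻¹' S) :=
  Measure.map_apply (R.measφ t x) hS

lemma law_prob (x : Y) (t : ℕ) : IsProbabilityMeasure (R.law x t) := by
  haveI := R.hprob
  rw [R.law_def]
  exact Measure.isProbabilityMeasure_map (R.measφ t x).aemeasurable

lemma P_pre_eq (h : Ω → Y) (hh : Measurable h) {S : Set Y} (hS : MeasurableSet S) :
    R.P (h ⁻¹' S) = ∫⁻ ω, S.indicator (fun _ => (1 : ℝ≥0∞)) (h ω) ∂(R.P) :=
  calc R.P (h ⁻¹' S)
      = ∫⁻ ω, (h ⁻¹' S).indicator (fun _ => (1 : ℝ≥0∞)) ω ∂(R.P) := by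
        rw [lintegral_indicator_const (hh hS), one_mul]
    _ = ∫⁻ ω, S.indicator (fun _ => (1 : ℝ≥0∞)) (h ω) ∂(R.P) :=
        lintegral_congr fun ω => by
          by_cases hω : h ω ∈ S <;> simp [Set.indicator, hω]

lemma comap_θ_le (s : ℕ) : R.bigF.comap (R.θ s) ≤ mΩ := by
  rw [bigF, MeasurableSpace.comap_iSup]
  exact iSup_le fun t => le_trans (measurable_iff_comap_le.mp (R.hθmeas t s)) (R.hle (t + s))

lemma measθ_bigF (s : ℕ) : @Measurable Ω Ω mΩ R.bigF (R.θ s) :=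
  measurable_iff_comap_le.mpr (R.comap_θ_le s)

/-- The core Markov-property computation, from `memless`. -/
lemma core (s : ℕ) {V : Ω → Y} (hV : Measurable[R.F s] V) {g : Y × Ω → ℝ≥0∞}
    (hg : @Measurable (Y × Ω) ℝ≥0∞ (mY.prod R.bigF) _ g) :
    ∫⁻ ω, g (V ω, R.θ s ω) ∂(R.P) = ∫⁻ ω, ∫⁻ ω', g (V ω, ω') ∂(R.P) ∂(R.P) := by
  haveI := R.hprob
  have hVm : Measurable V := hV.mono (R.hle s) le_rfl
  have hθ : @Measurable Ω Ω mΩ R.bigF (R.θ s) := R.measθ_bigF s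
  have hθa : @AEMeasurable Ω Ω R.bigF mΩ (R.θ s) R.P :=
    @Measurable.aemeasurable Ω Ω mΩ R.bigF (R.θ s) R.P hθ
  have hindep : @IndepFun Ω Y Ω mΩ mY R.bigF V (R.θ s) R.P := by
    refine (@indepFun_iff_measure_inter_preimage_eq_mul Ω Y Ω mΩ R.P V (R.θ s) mY
      R.bigF).mpr fun S T hS hT => ?_
    exact ((R.memless s).indepSet_of_measurableSet (hV hS)
      (⟨T, hT, rfl⟩ :
        MeasurableSet[((⨆ t, R.F t).comap (R.θ s))] (R.θ s ⁻¹' T))).measure_inter_eq_mul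
  have hmapeq : @Measure.map Ω (Y × Ω) mΩ (mY.prod R.bigF) (fun ω => (V ω, R.θ s ω)) R.P =
      @Measure.prod Y Ω mY R.bigF (R.P.map V) (@Measure.map Ω Ω mΩ R.bigF (R.θ s) R.P) :=
    (@indepFun_iff_map_prod_eq_prod_map_map Ω Y Ω mΩ R.P V (R.θ s) mY R.bigF _
      hVm.aemeasurable hθa).mp hindep
  haveI hPθprob : IsProbabilityMeasure (@Measure.map Ω Ω mΩ R.bigF (R.θ s) R.P) :=
    @Measure.isProbabilityMeasure_map Ω Ω mΩ R.bigF R.P _ _ hθa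
  haveI hPVprob : IsProbabilityMeasure (R.P.map V) :=
    Measure.isProbabilityMeasure_map hVm.aemeasurable
  have hpairmeas : @Measurable Ω (Y × Ω) mΩ (mY.prod R.bigF) (fun ω => (V ω, R.θ s ω)) :=
    @Measurable.prodMk Ω mΩ Y Ω mY R.bigF V (R.θ s) hVm hθ
  have step1 : ∫⁻ ω, g (V ω, R.θ s ω) ∂(R.P)
      = ∫⁻ p, g p ∂(@Measure.map Ω (Y × Ω) mΩ (mY.prod R.bigF) (fun ω => (V ω, R.θ s ω)) R.P) :=
    (@lintegral_map Ω (Y × Ω) mΩ (mY.prod R.bigF) R.P g (fun ω => (V ω, R.θ s ω))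
      hg hpairmeas).symm
  have step2 : ∫⁻ p, g p ∂(@Measure.map Ω (Y × Ω) mΩ (mY.prod R.bigF)
        (fun ω => (V ω, R.θ s ω)) R.P)
      = ∫⁻ z, ∫⁻ ω', g (z, ω') ∂(@Measure.map Ω Ω mΩ R.bigF (R.θ s) R.P) ∂(R.P.map V) := by
    rw [hmapeq]
    exact @lintegral_prod Y Ω mY R.bigF (R.P.map V) (@Measure.map Ω Ω mΩ R.bigF (R.θ s) R.P) _
      g (@Measurable.aemeasurable (Y × Ω) ℝ≥0∞ (mY.prod R.bigF) _ g _ hg)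
  have step3 : ∀ z : Y, ∫⁻ ω', g (z, ω') ∂(@Measure.map Ω Ω mΩ R.bigF (R.θ s) R.P)
      = ∫⁻ ω', g (z, ω') ∂(R.P) := by
    intro z
    have hgz : @Measurable Ω ℝ≥0∞ R.bigF _ (fun ω' => g (z, ω')) :=
      hg.comp (@Measurable.prodMk Ω R.bigF Y Ω mY R.bigF (fun _ => z) id
        measurable_const measurable_id)
    rw [@lintegral_map Ω Ω mΩ R.bigF R.P (fun ω' => g (z, ω')) (R.θ s) hgz hθ]
    exact (R.hθpres s).lintegral_comp (hgz.mono R.bigF_le le_rfl)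
  have hH : Measurable fun z : Y => ∫⁻ ω', g (z, ω') ∂(R.P) := by
    have hg' : Measurable g :=
      hg.mono (sup_le_sup le_rfl (MeasurableSpace.comap_mono R.bigF_le)) le_rfl
    exact hg'.lintegral_prod_right'
  have step4 : ∫⁻ z, ∫⁻ ω', g (z, ω') ∂(R.P) ∂(R.P.map V)
      = ∫⁻ ω, ∫⁻ ω', g (V ω, ω') ∂(R.P) ∂(R.P) := lintegral_map hH hVm
  rw [step1, step2, lintegral_congr step3, step4]

/-- Markov inequality: probability of hitting `D` at time `s + t` is at least
`c` times the probability of being in `W` at time `s`, provided from every point of `W`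
the chain hits `D` at time `t` with probability at least `c`. -/
lemma markov_le (s t : ℕ) (x : Y) {W D : Set Y} (hWo : IsOpen W) (hD : MeasurableSet D)
    (c : ℝ≥0∞) (hc : ∀ z ∈ W, c ≤ R.P ((fun ω => R.φ t ω z) ⁻¹' D)) :
    c * R.P ((fun ω => R.φ s ω x) ⁻¹' W) ≤ R.P ((fun ω => R.φ (s + t) ω x) ⁻¹' D) := by
  haveI := R.hprob
  have hswap : @Measurable (Y × Ω) (Ω × Y) (mY.prod R.bigF) ((R.F t).prod mY)
      (fun q => (q.2, q.1)) :=
    @Measurable.prodMk (Y × Ω) (mY.prod R.bigF) Ω Y (R.F t) mY _ _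
      ((@measurable_snd Y Ω mY R.bigF).mono le_rfl (R.F_le_bigF t))
      (@measurable_fst Y Ω mY R.bigF)
  have hg : @Measurable (Y × Ω) ℝ≥0∞ (mY.prod R.bigF) _
      (fun q : Y × Ω => D.indicator (fun _ => (1 : ℝ≥0∞)) (R.φ t q.2 q.1)) :=
    (measurable_const.indicator hD).comp ((R.hφmeas t).comp hswap)
  have key := R.core s (R.measφF s x) hg
  have hL : ∫⁻ ω, D.indicator (fun _ => (1 : ℝ≥0∞)) (R.φ t (R.θ s ω) (R.φ s ω x)) ∂(R.P)
      = R.P ((fun ω => R.φ (s + t) ω x) ⁻¹' D) := by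
    rw [R.P_pre_eq _ (R.measφ (s + t) x) hD]
    refine lintegral_congr fun ω => ?_
    have h := congrFun (R.hφcocycle s t ω) x
    simp only [Function.comp_apply] at h
    rw [h]
  have hR : c * R.P ((fun ω => R.φ s ω x) ⁻¹' W)
      ≤ ∫⁻ ω, ∫⁻ ω', D.indicator (fun _ => (1 : ℝ≥0∞)) (R.φ t ω' (R.φ s ω x)) ∂(R.P) ∂(R.P) := by
    have h1 : ∀ ω, W.indicator (fun _ => c) (R.φ s ω x)
        ≤ ∫⁻ ω', D.indicator (fun _ => (1 : ℝ≥0∞)) (R.φ t ω' (R.φ s ω x)) ∂(R.P) := by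
      intro ω
      by_cases hω : R.φ s ω x ∈ W
      · rw [Set.indicator_of_mem hω]
        calc c ≤ R.P ((fun ω' => R.φ t ω' (R.φ s ω x)) ⁻¹' D) := hc _ hω
          _ = ∫⁻ ω', D.indicator (fun _ => (1 : ℝ≥0∞)) (R.φ t ω' (R.φ s ω x)) ∂(R.P) :=
            R.P_pre_eq _ (R.measφ t _) hD
      · rw [Set.indicator_of_notMem hω]
        exact zero_le
    have h2 : ∫⁻ ω, W.indicator (fun _ => c) (R.φ s ω x) ∂(R.P)
        = c * R.P ((fun ω => R.φ s ω x) ⁻¹' W) := by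
      have h3 : (fun ω => W.indicator (fun _ => c) (R.φ s ω x))
          = ((fun ω => R.φ s ω x) ⁻¹' W).indicator (fun _ => c) := by
        funext ω
        by_cases hω : R.φ s ω x ∈ W <;> simp [Set.indicator, hω]
      rw [h3, lintegral_indicator_const ((R.measφ s x) hWo.measurableSet)]
    calc c * R.P ((fun ω => R.φ s ω x) ⁻¹' W)
        = ∫⁻ ω, W.indicator (fun _ => c) (R.φ s ω x) ∂(R.P) := h2.symm
      _ ≤ _ := lintegral_mono h1
  exact le_trans hR (le_of_eq (key.symm.trans hL))

lemma isOpen_hit_gt (s : ℕ) {D : Set Y} (hD : IsOpen D) (c : ℝ≥0∞) :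
    IsOpen {x : Y | c < R.P ((fun ω => R.φ s ω x) ⁻¹' D)} := by
  rw [← isClosed_compl_iff]
  have hset : {x : Y | c < R.P ((fun ω => R.φ s ω x) ⁻¹' D)}ᶜ
      = {x : Y | R.P ((fun ω => R.φ s ω x) ⁻¹' D) ≤ c} := by
    ext x; simp [not_lt]
  rw [hset]
  refine IsSeqClosed.isClosed ?_
  intro xs x hxs hlim
  simp only [Set.mem_setOf_eq] at hxs ⊢
  set I : ℕ → Set Ω := fun N => ⋂ k, ⋂ (_ : N ≤ k), (fun ω => R.φ s ω (xs k)) ⁻¹' D with hI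
  have hImeas : ∀ N, MeasurableSet (I N) := fun N =>
    MeasurableSet.iInter fun k => MeasurableSet.iInter fun _ =>
      (R.measφ s (xs k)) hD.measurableSet
  have hsub : (fun ω => R.φ s ω x) ⁻¹' D ⊆ ⋃ N, I N := by
    intro ω hω
    have hcont : Filter.Tendsto (fun n => R.φ s ω (xs n)) Filter.atTop (nhds (R.φ s ω x)) :=
      ((R.hφcont s ω).tendsto x).comp hlim
    have hev : ∀ᶠ n in Filter.atTop, R.φ s ω (xs n) ∈ D :=
      hcont.eventually (hD.eventually_mem hω)
    obtain ⟨N, hN⟩ := Filter.eventually_atTop.mp hev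
    exact Set.mem_iUnion.mpr ⟨N, Set.mem_iInter.mpr fun k => Set.mem_iInter.mpr fun hk => hN k hk⟩
  have hmono : Monotone I := by
    intro N M hNM ω hω
    exact Set.mem_iInter.mpr fun k => Set.mem_iInter.mpr fun hk =>
      Set.mem_iInter.mp (Set.mem_iInter.mp hω k) (hNM.trans hk)
  calc R.P ((fun ω => R.φ s ω x) ⁻¹' D) ≤ R.P (⋃ N, I N) := measure_mono hsub
    _ = ⨆ N, R.P (I N) := hmono.directed_le.measure_iUnion
    _ ≤ c := by
        refine iSup_le fun N => le_trans (measure_mono ?_) (hxs N)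
        intro ω hω
        exact Set.mem_iInter.mp (Set.mem_iInter.mp hω N) le_rfl

/-- The set of points from which the open set `D` is never hit. -/
def NeverHit (D : Set Y) : Set Y :=
  {x | ∀ s : ℕ, R.P ((fun ω => R.φ s ω x) ⁻¹' D) = 0}

lemma neverHit_closed {D : Set Y} (hD : IsOpen D) : IsClosed (R.NeverHit D) := by
  have hset : R.NeverHit D
      = ⋂ s : ℕ, {x : Y | (0 : ℝ≥0∞) < R.P ((fun ω => R.φ s ω x) ⁻¹' D)}ᶜ := by
    ext x
    simp [NeverHit, pos_iff_ne_zero]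
  rw [hset]
  exact isClosed_iInter fun s => (R.isOpen_hit_gt s hD 0).isClosed_compl

lemma neverHit_fwdInv {D K₀ : Set Y} (hD : IsOpen D) (hK : R.FwdInv K₀) :
    R.FwdInv (R.NeverHit D ∩ K₀) := by
  haveI := R.hprob
  have hNcl : IsClosed (R.NeverHit D) := R.neverHit_closed hD
  refine ⟨hNcl.inter hK.1, ?_⟩
  rintro x ⟨hxN, hxK⟩ u
  haveI : IsProbabilityMeasure (R.law x u) := R.law_prob x u
  have hmeas : MeasurableSet (R.NeverHit D ∩ K₀) := (hNcl.inter hK.1).measurableSet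
  rw [← prob_compl_eq_zero_iff hmeas, Set.compl_inter]
  refine measure_union_null ?_ ?_
  · have hcover : (R.NeverHit D)ᶜ ⊆ ⋃ s : ℕ, ⋃ n : ℕ,
        {z : Y | ((n : ℝ≥0∞))⁻¹ < R.P ((fun ω => R.φ s ω z) ⁻¹' D)} := by
      intro z hz
      simp only [NeverHit, Set.mem_compl_iff, Set.mem_setOf_eq, not_forall] at hz
      obtain ⟨s, hs⟩ := hz
      obtain ⟨n, hn⟩ := ENNReal.exists_inv_nat_lt hs
      exact Set.mem_iUnion.mpr ⟨s, Set.mem_iUnion.mpr ⟨n, hn⟩⟩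
    refine measure_mono_null hcover ?_
    refine measure_iUnion_null fun s => measure_iUnion_null fun n => ?_
    have hWo : IsOpen {z : Y | ((n : ℝ≥0∞))⁻¹ < R.P ((fun ω => R.φ s ω z) ⁻¹' D)} :=
      R.isOpen_hit_gt s hD _
    rw [R.law_apply x u hWo.measurableSet]
    by_contra hpos
    have h1 : ((n : ℝ≥0∞))⁻¹ * R.P ((fun ω => R.φ u ω x) ⁻¹'
        {z : Y | ((n : ℝ≥0∞))⁻¹ < R.P ((fun ω => R.φ s ω z) ⁻¹' D)})
        ≤ R.P ((fun ω => R.φ (u + s) ω x) ⁻¹' D) :=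
      R.markov_le u s x hWo hD.measurableSet _ (fun z hz => le_of_lt hz)
    rw [hxN (u + s)] at h1
    have h2 : ((n : ℝ≥0∞))⁻¹ ≠ 0 := ENNReal.inv_ne_zero.mpr (ENNReal.natCast_ne_top n)
    rcases mul_eq_zero.mp (le_antisymm h1 zero_le) with h | h
    · exact h2 h
    · exact hpos h
  · rw [R.law_apply x u hK.1.measurableSet.compl]
    have hKfull := hK.2 x hxK u
    rw [R.law_apply x u hK.1.measurableSet] at hKfull
    rw [Set.preimage_compl]
    exact (prob_compl_eq_zero_iff ((R.measφ u x) hK.1.measurableSet)).mpr hKfull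

/-- One-point accessibility on a minimal set. -/
lemma reach {K D : Set Y} (hmin : R.Minimal K) (hD : IsOpen D) (hDK : (D ∩ K).Nonempty)
    {b : Y} (hb : b ∈ K) : ∃ s : ℕ, R.P ((fun ω => R.φ s ω b) ⁻¹' D) ≠ 0 := by
  haveI := R.hprob
  by_contra h
  push_neg at h
  have hfwd := R.neverHit_fwdInv hD hmin.2.1
  rcases hmin.2.2 _ Set.inter_subset_right hfwd with hKeq | hempty
  · obtain ⟨v, hvD, hvK⟩ := hDK
    have hv : v ∈ R.NeverHit D ∩ K := hKeq.symm ▸ hvK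
    have h0 := hv.1 0
    have hpre : (fun ω => R.φ 0 ω v) ⁻¹' D = Set.univ := by
      ext ω
      simp [R.hφ0, hvD]
    rw [hpre, measure_univ] at h0
    exact one_ne_zero h0
  · have hbmem : b ∈ R.NeverHit D ∩ K := ⟨h, hb⟩
    rw [hempty] at hbmem
    exact hbmem

end Generic

section Pair

variable {Ω X : Type*} [mΩ : MeasurableSpace Ω] [MetricSpace X] [mX : MeasurableSpace X]
  [BorelSpace X] [SecondCountableTopology X]

/-- The two-point motion of an MRDS. -/
noncomputable def pair (R : MRDS Ω X) : MRDS Ω (X × X) where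
  P := R.P
  hprob := R.hprob
  F := R.F
  hle := R.hle
  hmono := R.hmono
  θ := R.θ
  hθ0 := R.hθ0
  hθadd := R.hθadd
  hθmeas := R.hθmeas
  hθpres := R.hθpres
  memless := R.memless
  φ := fun t ω p => (R.φ t ω p.1, R.φ t ω p.2)
  hφcont := fun t ω =>
    ((R.hφcont t ω).comp continuous_fst).prodMk ((R.hφcont t ω).comp continuous_snd)
  hφmeas := fun t => by
    have h1 : @Measurable (Ω × (X × X)) (Ω × X) ((R.F t).prod (mX.prod mX)) ((R.F t).prod mX)
        (fun p => (p.1, p.2.1)) :=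
      @Measurable.prodMk _ ((R.F t).prod (mX.prod mX)) _ _ (R.F t) mX _ _
        (@measurable_fst Ω (X × X) (R.F t) (mX.prod mX))
        ((@measurable_fst X X mX mX).comp (@measurable_snd Ω (X × X) (R.F t) (mX.prod mX)))
    have h2 : @Measurable (Ω × (X × X)) (Ω × X) ((R.F t).prod (mX.prod mX)) ((R.F t).prod mX)
        (fun p => (p.1, p.2.2)) :=
      @Measurable.prodMk _ ((R.F t).prod (mX.prod mX)) _ _ (R.F t) mX _ _
        (@measurable_fst Ω (X × X) (R.F t) (mX.prod mX))
        ((@measurable_snd X X mX mX).comp (@measurable_snd Ω (X × X) (R.F t) (mX.prod mX)))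
    exact @Measurable.prodMk _ ((R.F t).prod (mX.prod mX)) _ _ mX mX _ _
      ((R.hφmeas t).comp h1) ((R.hφmeas t).comp h2)
  hφ0 := fun ω => by
    funext p
    show (R.φ 0 ω p.1, R.φ 0 ω p.2) = id p
    rw [R.hφ0]
    rfl
  hφcocycle := fun s t ω => by
    funext p
    show (R.φ (s + t) ω p.1, R.φ (s + t) ω p.2) = _
    rw [R.hφcocycle s t ω]
    rfl

@[simp] lemma pair_P (R : MRDS Ω X) : (R.pair).P = R.P := rfl

@[simp] lemma pair_φ (R : MRDS Ω X) (t : ℕ) (ω : Ω) (p : X × X) :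
    (R.pair).φ t ω p = (R.φ t ω p.1, R.φ t ω p.2) := rfl

end Pair

/-- Intersection of two full-measure sets is full. -/
lemma inter_one {α : Type*} [MeasurableSpace α] (μ : Measure α) [IsProbabilityMeasure μ]
    {E1 E2 : Set α} (h1 : MeasurableSet E1) (h2 : MeasurableSet E2)
    (he1 : μ E1 = 1) (he2 : μ E2 = 1) : μ (E1 ∩ E2) = 1 := by
  rw [← prob_compl_eq_zero_iff (h1.inter h2), Set.compl_inter]
  exact measure_union_null ((prob_compl_eq_zero_iff h1).mpr he1)
    ((prob_compl_eq_zero_iff h2).mpr he2)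

/-- Intersecting with a full-measure set does not decrease measure. -/
lemma inter_conull {α : Type*} [MeasurableSpace α] (μ : Measure α) [IsProbabilityMeasure μ]
    {E1 E2 : Set α} (h2 : MeasurableSet E2) (he2 : μ E2 = 1) : μ E1 ≤ μ (E1 ∩ E2) := by
  have hsub : E1 ⊆ (E1 ∩ E2) ∪ E2ᶜ := by
    intro a ha
    by_cases h : a ∈ E2
    · exact Or.inl ⟨ha, h⟩
    · exact Or.inr h
  calc μ E1 ≤ μ ((E1 ∩ E2) ∪ E2ᶜ) := measure_mono hsub
    _ ≤ μ (E1 ∩ E2) + μ E2ᶜ := measure_union_le _ _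
    _ = μ (E1 ∩ E2) := by rw [(prob_compl_eq_zero_iff h2).mpr he2, add_zero]

end MRDS

/-- If `ρ` is a stationary measure whose support `K` is minimal, and `A ⊆ K` has full
`ρ`-measure, non-empty interior relative to `K`, and all pairs of points of `A`
contractible, then `φ` is two-point contractible on all of `K`. -/
theorem stmt13 {Ω X : Type*} [MeasurableSpace Ω] [MetricSpace X] [CompactSpace X]
    [MeasurableSpace X] [BorelSpace X] (R : MRDS Ω X)
    (ρ : Measure X) (hρ : IsProbabilityMeasure ρ) (hstat : R.stationary ρ)
    (K : Set X) (hsupp : K = {x : X | ∀ U : Set X, IsOpen U → x ∈ U → 0 < ρ U})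
    (hmin : R.Minimal K)
    (A : Set X) (hAK : A ⊆ K) (hAfull : ρ A = 1)
    (hAint : ∃ U : Set X, IsOpen U ∧ (U ∩ K).Nonempty ∧ U ∩ K ⊆ A)
    (hAcontr : ∀ x ∈ A, ∀ y ∈ A, ∀ ε > (0 : ℝ),
      0 < R.P {ω | ∃ t, dist (R.φ t ω x) (R.φ t ω y) < ε}) :
    ∀ x ∈ K, ∀ y ∈ K, ∀ ε > (0 : ℝ),
      0 < R.P {ω | ∃ t, dist (R.φ t ω x) (R.φ t ω y) < ε} := by
  haveI := R.hprob
  intro x hx y hy ε hε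
  by_contra hcon
  have hS0 : R.P {ω | ∃ t, dist (R.φ t ω x) (R.φ t ω y) < ε} = 0 := by
    by_contra h
    exact hcon (pos_iff_ne_zero.mpr h)
  obtain ⟨U, hUo, hUKne, hUKA⟩ := hAint
  set D : Set (X × X) := {q | dist q.1 q.2 < ε} with hD
  have hDo : IsOpen D := isOpen_lt (continuous_fst.dist continuous_snd) continuous_const
  have hKcl : IsClosed K := hmin.2.1.1
  -- the product K ×ˢ K is forward invariant for the two-point motion
  have hKK : (R.pair).FwdInv (K ×ˢ K) := by
    refine ⟨hKcl.prod hKcl, ?_⟩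
    intro p hp t
    rw [Set.mem_prod] at hp
    haveI := (R.pair).law_prob p t
    rw [(R.pair).law_apply p t ((hKcl.prod hKcl).measurableSet)]
    have hpree : ((fun ω => (R.pair).φ t ω p) ⁻¹' (K ×ˢ K))
        = ((fun ω => R.φ t ω p.1) ⁻¹' K) ∩ ((fun ω => R.φ t ω p.2) ⁻¹' K) := by
      ext ω
      simp [MRDS.pair_φ, Set.mem_prod]
    rw [hpree]
    have h1 := hmin.2.1.2 p.1 hp.1 t
    rw [R.law_apply p.1 t hKcl.measurableSet] at h1
    have h2 := hmin.2.1.2 p.2 hp.2 t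
    rw [R.law_apply p.2 t hKcl.measurableSet] at h2
    exact MRDS.inter_one R.P ((R.measφ t p.1) hKcl.measurableSet)
      ((R.measφ t p.2) hKcl.measurableSet) h1 h2
  -- the set of pairs in K × K from which D is never hit
  set H : Set (X × X) := (R.pair).NeverHit D ∩ (K ×ˢ K) with hHdef
  have hHfwd : (R.pair).FwdInv H := (R.pair).neverHit_fwdInv hDo hKK
  have hHcl : IsClosed H := hHfwd.1
  have hHK : H ⊆ K ×ˢ K := Set.inter_subset_right
  have hxyH : (x, y) ∈ H := by
    refine ⟨fun s => ?_, Set.mem_prod.mpr ⟨hx, hy⟩⟩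
    refine measure_mono_null (fun ω hω => ?_) hS0
    exact ⟨s, hω⟩
  -- the first projection of H is all of K
  have hTfwd : R.FwdInv (Prod.fst '' H) := by
    have hTcl : IsClosed (Prod.fst '' H) := (hHcl.isCompact.image continuous_fst).isClosed
    refine ⟨hTcl, ?_⟩
    rintro a ⟨p, hpH, rfl⟩ u
    haveI := R.law_prob p.1 u
    refine le_antisymm prob_le_one ?_
    rw [R.law_apply p.1 u hTcl.measurableSet]
    have h2 : R.P ((fun ω => (R.pair).φ u ω p) ⁻¹' H) = 1 := by
      have h3 := hHfwd.2 p hpH u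
      rwa [(R.pair).law_apply p u hHcl.measurableSet] at h3
    refine le_trans (le_of_eq h2.symm) (measure_mono fun ω hω => ?_)
    exact ⟨(R.pair).φ u ω p, hω, rfl⟩
  have hTK : Prod.fst '' H = K := by
    have hsubT : Prod.fst '' H ⊆ K := by
      rintro a ⟨p, hpH, rfl⟩
      exact (Set.mem_prod.mp (hHK hpH)).1
    rcases hmin.2.2 (Prod.fst '' H) hsubT hTfwd with h | h
    · exact h
    · exfalso
      have hxT : x ∈ Prod.fst '' H := ⟨(x, y), hxyH, rfl⟩
      rw [h] at hxT
      exact hxT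
  -- accessibility of U from any point of K
  have hreach : ∀ b ∈ K, ∃ s : ℕ, R.P ((fun ω => R.φ s ω b) ⁻¹' U) ≠ 0 :=
    fun b hb => R.reach hmin hUo hUKne hb
  -- closed exhaustion of U
  set C : ℕ → Set X := fun n => {z | ∀ w, w ∉ U → 1 / ((n : ℝ) + 1) ≤ dist z w} with hC
  have hCcl : ∀ n, IsClosed (C n) := by
    intro n
    have hCn : C n = ⋂ (w) (_ : w ∉ U), {z | 1 / ((n : ℝ) + 1) ≤ dist z w} := by
      ext z
      simp [hC]
    rw [hCn]
    exact isClosed_iInter fun w => isClosed_iInter fun _ =>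
      isClosed_le continuous_const (continuous_id.dist continuous_const)
  have hCU : ∀ n, C n ⊆ U := by
    intro n z hz
    by_contra hzU
    have h1 := hz z hzU
    rw [dist_self] at h1
    have h2 : (0 : ℝ) < 1 / ((n : ℝ) + 1) := by positivity
    linarith
  have hUC : U ⊆ ⋃ n, C n := by
    intro z hz
    obtain ⟨r, hr, hball⟩ := Metric.isOpen_iff.mp hUo z hz
    obtain ⟨n, hn⟩ := exists_nat_one_div_lt hr
    refine Set.mem_iUnion.mpr ⟨n, fun w hw => ?_⟩
    have hwb : w ∉ Metric.ball z r := fun hmem => hw (hball hmem)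
    rw [Metric.mem_ball, not_lt] at hwb
    calc 1 / ((n : ℝ) + 1) ≤ r := hn.le
      _ ≤ dist w z := hwb
      _ = dist z w := dist_comm w z
  -- the projected set Z
  set Zn : ℕ → Set X := fun n => Prod.fst '' (H ∩ (Set.univ ×ˢ C n)) with hZn
  have hZncomp : ∀ n, IsCompact (Zn n) := fun n =>
    ((hHcl.inter (isClosed_univ.prod (hCcl n))).isCompact).image continuous_fst
  set Z : Set X := ⋃ n, Zn n with hZdef
  have hZmeas : MeasurableSet Z :=
    MeasurableSet.iUnion fun n => (hZncomp n).isClosed.measurableSet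
  -- Z is ρ-null since it misses A
  have hZnnull : ∀ n, ρ (Zn n) = 0 := by
    intro n
    have hdisj : ∀ a, a ∈ Zn n → a ∉ A := by
      rintro a ⟨p, ⟨hpH, hpC⟩, rfl⟩ haA
      have hp2A : p.2 ∈ A := hUKA ⟨hCU n hpC.2, (Set.mem_prod.mp (hHK hpH)).2⟩
      have hpos := hAcontr p.1 haA p.2 hp2A ε hε
      have hz : R.P {ω | ∃ t, dist (R.φ t ω p.1) (R.φ t ω p.2) < ε} = 0 := by
        have hsub : {ω | ∃ t, dist (R.φ t ω p.1) (R.φ t ω p.2) < ε}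
            ⊆ ⋃ t : ℕ, (fun ω => (R.pair).φ t ω p) ⁻¹' D := by
          rintro ω ⟨t, ht⟩
          exact Set.mem_iUnion.mpr ⟨t, ht⟩
        exact measure_mono_null hsub (measure_iUnion_null fun t => hpH.1 t)
      rw [hz] at hpos
      exact lt_irrefl _ hpos
    have hsub : A ⊆ (Zn n)ᶜ := fun a ha hZa => hdisj a hZa ha
    have h1 : (1 : ℝ≥0∞) ≤ ρ (Zn n)ᶜ := hAfull ▸ measure_mono hsub
    by_contra hne
    have hlt : (1 : ℝ≥0∞) - ρ (Zn n) < 1 :=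
      ENNReal.sub_lt_self ENNReal.one_ne_top one_ne_zero hne
    rw [measure_compl (hZncomp n).isClosed.measurableSet (measure_ne_top ρ _),
      measure_univ] at h1
    exact absurd h1 (not_le.mpr hlt)
  have hZnull : ρ Z = 0 := measure_iUnion_null hZnnull
  -- by stationarity, the set of points reaching Z is ρ-null
  have hNs : ∀ s : ℕ, ρ {a : X | R.P ((fun ω => R.φ s ω a) ⁻¹' Z) ≠ 0} = 0 := by
    intro s
    have hmeasF : Measurable fun a : X => R.P ((fun ω => R.φ s ω a) ⁻¹' Z) := by
      have h1 : Measurable fun q : X × Ω => Z.indicator (fun _ => (1 : ℝ≥0∞)) (R.φ s q.2 q.1) :=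
        (measurable_const.indicator hZmeas).comp ((R.measφJoint s).comp measurable_swap)
      have h2 : Measurable fun a : X => ∫⁻ ω, Z.indicator (fun _ => (1 : ℝ≥0∞))
          (R.φ s ω a) ∂(R.P) := h1.lintegral_prod_right'
      have h3 : (fun a : X => R.P ((fun ω => R.φ s ω a) ⁻¹' Z))
          = fun a => ∫⁻ ω, Z.indicator (fun _ => (1 : ℝ≥0∞)) (R.φ s ω a) ∂(R.P) := by
        funext a
        exact R.P_pre_eq _ (R.measφ s a) hZmeas
      rw [h3]
      exact h2
    have hint : ∫⁻ a, R.P ((fun ω => R.φ s ω a) ⁻¹' Z) ∂ρ = 0 := by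
      calc ∫⁻ a, R.P ((fun ω => R.φ s ω a) ⁻¹' Z) ∂ρ
          = ∫⁻ a, R.law a s Z ∂ρ := lintegral_congr fun a => (R.law_apply a s hZmeas).symm
        _ = ρ Z := hstat s Z hZmeas
        _ = 0 := hZnull
    have hae := (lintegral_eq_zero_iff hmeasF).mp hint
    exact ae_iff.mp hae
  -- but every point of K reaches Z, contradiction
  have hKsub : K ⊆ ⋃ s : ℕ, {a : X | R.P ((fun ω => R.φ s ω a) ⁻¹' Z) ≠ 0} := by
    intro a haK
    rw [← hTK] at haK
    obtain ⟨p, hpH, rfl⟩ := haK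
    obtain ⟨s, hs⟩ := hreach p.2 (Set.mem_prod.mp (hHK hpH)).2
    refine Set.mem_iUnion.mpr ⟨s, ?_⟩
    have hE2 : R.P ((fun ω => (R.pair).φ s ω p) ⁻¹' H) = 1 := by
      have h3 := hHfwd.2 p hpH s
      rwa [(R.pair).law_apply p s hHcl.measurableSet] at h3
    have hsub2 : ((fun ω => R.φ s ω p.2) ⁻¹' U) ∩ ((fun ω => (R.pair).φ s ω p) ⁻¹' H)
        ⊆ (fun ω => R.φ s ω p.1) ⁻¹' Z := by
      rintro ω ⟨hω1, hω2⟩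
      obtain ⟨n, hn⟩ := Set.mem_iUnion.mp (hUC hω1)
      exact Set.mem_iUnion.mpr ⟨n, ⟨(R.pair).φ s ω p, ⟨hω2, ⟨trivial, hn⟩⟩, rfl⟩⟩
    have hle2 : R.P ((fun ω => R.φ s ω p.2) ⁻¹' U)
        ≤ R.P ((fun ω => R.φ s ω p.1) ⁻¹' Z) :=
      le_trans (MRDS.inter_conull R.P ((R.pair).measφ s p hHcl.measurableSet) hE2)
        (measure_mono hsub2)
    simp only [Set.mem_setOf_eq]
    intro h0
    rw [h0] at hle2
    exact hs (le_antisymm hle2 zero_le)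
  have hfinal : (1 : ℝ≥0∞) ≤ 0 := by
    calc (1 : ℝ≥0∞) = ρ A := hAfull.symm
      _ ≤ ρ K := measure_mono hAK
      _ ≤ ρ (⋃ s : ℕ, {a : X | R.P ((fun ω => R.φ s ω a) ⁻¹' Z) ≠ 0}) := measure_mono hKsub
      _ ≤ ∑' s : ℕ, ρ {a : X | R.P ((fun ω => R.φ s ω a) ⁻¹' Z) ≠ 0} := measure_iUnion_le _
      _ = 0 := by simp [hNs]
  exact absurd hfinal (by simp)
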